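/- arXiv:1802.02309 — 2 statements merged into one kernel-verified Lean document; each statement's English description precedes it below -/
import Mathlib

section
/- With Θ_1 and Θ_4 defined as in the comparison Θ_4 ≤ Θ_1, equality Θ_4 = Θ_1 holds if and only if the functions i ↦ Λ_i, i ↦ β_i, and i ↦ μ_i are all constant on M. -/
open Finset

theorem theta4_eq_theta1_iff
    {M : Type*} [Fintype M] [Nonempty M]
    (Λ μ β ν δ π : M → ℝ)
    (hΛ : ∀ i, 0 < Λ i) (hμ : ∀ i, 0 < μ i) (hβ : ∀ i, 0 < β i)
    (hν : ∀ i, 0 < ν i) (hδ : ∀ i, 0 < δ i)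
    (hπ : ∀ i, 0 < π i) (hπsum : ∑ i, π i = 1) :
    ((∑ i, π i * Λ i) /
      ((Finset.univ.sup' Finset.univ_nonempty (fun i => μ i / β i)) *
        ∑ i, π i * (μ i + ν i + δ i)) =
    ((Finset.univ.sup' Finset.univ_nonempty Λ) * ∑ i, π i * β i) /
      ((Finset.univ.inf' Finset.univ_nonempty μ) *
        ∑ i, π i * (μ i + ν i + δ i)))
    ↔ ((∀ i j, Λ i = Λ j) ∧ (∀ i j, β i = β j) ∧ (∀ i j, μ i = μ j)) := by
  obtain ⟨i₀⟩ := (inferInstance : Nonempty M)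
  set c := Finset.univ.sup' Finset.univ_nonempty (fun i => μ i / β i) with hcdef
  set m := Finset.univ.inf' Finset.univ_nonempty μ with hmdef
  set B := Finset.univ.sup' Finset.univ_nonempty Λ with hBdef
  set A := ∑ i, π i * Λ i with hAdef
  set D := ∑ i, π i * β i with hDdef
  set s := ∑ i, π i * (μ i + ν i + δ i) with hsdef
  have hcle : ∀ i, μ i ≤ c * β i := by
    intro i
    have h1 : μ i / β i ≤ c := Finset.le_sup' (fun i => μ i / β i) (mem_univ i)
    rw [div_le_iff₀ (hβ i)] at h1
    linarith [h1]
  have hmle : ∀ i, m ≤ μ i := fun i => Finset.inf'_le μ (mem_univ i)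
  have hBle : ∀ i, Λ i ≤ B := fun i => Finset.le_sup' Λ (mem_univ i)
  have hc0 : 0 < c :=
    lt_of_lt_of_le (div_pos (hμ i₀) (hβ i₀)) (Finset.le_sup' (fun i => μ i / β i) (mem_univ i₀))
  have hm0 : 0 < m := by
    obtain ⟨j, _, hj⟩ := Finset.exists_mem_eq_inf' Finset.univ_nonempty μ
    rw [hmdef, hj]; exact hμ j
  have hB0 : 0 < B := lt_of_lt_of_le (hΛ i₀) (hBle i₀)
  have hA0 : 0 < A := Finset.sum_pos (fun i _ => mul_pos (hπ i) (hΛ i)) univ_nonempty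
  have hD0 : 0 < D := Finset.sum_pos (fun i _ => mul_pos (hπ i) (hβ i)) univ_nonempty
  have hs0 : 0 < s := Finset.sum_pos (fun i _ => mul_pos (hπ i) (add_pos (add_pos (hμ i) (hν i)) (hδ i))) univ_nonempty
  have hAB : A ≤ B := by
    calc A ≤ ∑ i, π i * B :=
          Finset.sum_le_sum (fun i _ => mul_le_mul_of_nonneg_left (hBle i) (hπ i).le)
      _ = B := by rw [← Finset.sum_mul, hπsum, one_mul]
  have hπμ : m ≤ ∑ i, π i * μ i := by
    calc m = ∑ i, π i * m := by rw [← Finset.sum_mul, hπsum, one_mul]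
      _ ≤ ∑ i, π i * μ i :=
          Finset.sum_le_sum (fun i _ => mul_le_mul_of_nonneg_left (hmle i) (hπ i).le)
  have hμcD : (∑ i, π i * μ i) ≤ c * D := by
    calc (∑ i, π i * μ i) ≤ ∑ i, π i * (c * β i) :=
          Finset.sum_le_sum (fun i _ => mul_le_mul_of_nonneg_left (hcle i) (hπ i).le)
      _ = c * D := by rw [hDdef, Finset.mul_sum]; apply Finset.sum_congr rfl; intros; ring
  have hmD : m ≤ c * D := hπμ.trans hμcD
  rw [div_eq_div_iff (by positivity) (by positivity)]
  constructor
  · intro h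
    have key : A * m = B * D * c := mul_right_cancel₀ hs0.ne' (by linear_combination h)
    have hcDm : c * D = m := by nlinarith [mul_le_mul_of_nonneg_right hAB hm0.le]
    have hABeq : A = B := by
      have : A * m = B * m := by rw [key]; nlinarith [hcDm]
      exact mul_right_cancel₀ hm0.ne' this
    -- Λ constant
    have hΛc : ∀ i, Λ i = B := by
      have hz : ∑ i, π i * (B - Λ i) = 0 := by
        have : ∑ i, π i * (B - Λ i) = (∑ i, π i) * B - A := by
          rw [Finset.sum_mul, ← Finset.sum_sub_distrib]
          apply Finset.sum_congr rfl; intros; ring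
        rw [this, hπsum, one_mul, hABeq, sub_self]
      intro i
      have h0 := (Finset.sum_eq_zero_iff_of_nonneg
        (fun j _ => mul_nonneg (hπ j).le (sub_nonneg.2 (hBle j)))).mp hz i (mem_univ i)
      have := (hπ i).ne'
      have h1 : B - Λ i = 0 := by
        rcases mul_eq_zero.mp h0 with h' | h'
        · exact absurd h' this
        · exact h'
      linarith
    -- m = ∑ π μ and ∑ π μ = c D
    have hmsum : m = ∑ i, π i * μ i := le_antisymm hπμ (by linarith [hμcD, hcDm])
    have hsumcD : (∑ i, π i * μ i) = c * D := le_antisymm hμcD (by linarith [hπμ, hcDm])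
    have hμc : ∀ i, μ i = m := by
      have hz : ∑ i, π i * (μ i - m) = 0 := by
        have : ∑ i, π i * (μ i - m) = (∑ i, π i * μ i) - (∑ i, π i) * m := by
          rw [Finset.sum_mul, ← Finset.sum_sub_distrib]
          apply Finset.sum_congr rfl; intros; ring
        rw [this, hπsum, one_mul, ← hmsum, sub_self]
      intro i
      have h0 := (Finset.sum_eq_zero_iff_of_nonneg
        (fun j _ => mul_nonneg (hπ j).le (sub_nonneg.2 (hmle j)))).mp hz i (mem_univ i)
      have := (hπ i).ne'
      have h1 : μ i - m = 0 := by
        rcases mul_eq_zero.mp h0 with h' | h'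
        · exact absurd h' this
        · exact h'
      linarith
    have hβc : ∀ i, c * β i = μ i := by
      have hz : ∑ i, π i * (c * β i - μ i) = 0 := by
        have : ∑ i, π i * (c * β i - μ i) = c * D - ∑ i, π i * μ i := by
          rw [hDdef, Finset.mul_sum, ← Finset.sum_sub_distrib]
          apply Finset.sum_congr rfl; intros; ring
        rw [this, hsumcD, sub_self]
      intro i
      have h0 := (Finset.sum_eq_zero_iff_of_nonneg
        (fun j _ => mul_nonneg (hπ j).le (sub_nonneg.2 (hcle j)))).mp hz i (mem_univ i)
      have := (hπ i).ne'
      have h1 : c * β i - μ i = 0 := by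
        rcases mul_eq_zero.mp h0 with h' | h'
        · exact absurd h' this
        · exact h'
      linarith
    refine ⟨fun i j => by rw [hΛc i, hΛc j], fun i j => ?_, fun i j => by rw [hμc i, hμc j]⟩
    have hi := hβc i; have hj := hβc j
    rw [hμc i] at hi; rw [hμc j] at hj
    have : c * β i = c * β j := by rw [hi, hj]
    exact mul_left_cancel₀ hc0.ne' this
  · rintro ⟨hΛc, hβc, hμc⟩
    have hBeq : B = Λ i₀ :=
      le_antisymm (Finset.sup'_le _ _ (fun i _ => le_of_eq (hΛc i i₀))) (hBle i₀)
    have hmeq : m = μ i₀ :=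
      le_antisymm (hmle i₀) (Finset.le_inf' _ _ (fun i _ => le_of_eq (hμc i₀ i)))
    have hceq : c = μ i₀ / β i₀ := by
      refine le_antisymm (Finset.sup'_le _ _ (fun i _ => le_of_eq ?_))
        (Finset.le_sup' (fun i => μ i / β i) (mem_univ i₀))
      rw [hμc i i₀, hβc i i₀]
    have hAeq : A = Λ i₀ := by
      rw [hAdef]
      calc ∑ i, π i * Λ i = ∑ i, π i * Λ i₀ := by
            apply Finset.sum_congr rfl; intro i _; rw [hΛc i i₀]
        _ = Λ i₀ := by rw [← Finset.sum_mul, hπsum, one_mul]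
    have hDeq : D = β i₀ := by
      rw [hDdef]
      calc ∑ i, π i * β i = ∑ i, π i * β i₀ := by
            apply Finset.sum_congr rfl; intro i _; rw [hβc i i₀]
        _ = β i₀ := by rw [← Finset.sum_mul, hπsum, one_mul]
    rw [hBeq, hmeq, hceq, hAeq, hDeq]
    have hb := (hβ i₀).ne'
    field_simp
end

section
/- For each i in a finite set M define R_0^(i) = Λ_i β_i / (μ_i (μ_i + ν_i + δ_i)). If R_0^(i) > 1 for every i ∈ M, then Θ_1 = (max_i Λ_i · Σ_i π_i β_i) / (min_i μ_i · Σ_i π_i (μ_i + ν_i + δ_i)) > 1 for every probability vector π on M with positive entries. -/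
open Finset

theorem theta1_gt_one_of_R0_gt_one
    {M : Type*} [Fintype M] [Nonempty M]
    (Λ μ β ν δ π : M → ℝ)
    (hΛ : ∀ i, 0 < Λ i) (hμ : ∀ i, 0 < μ i) (hβ : ∀ i, 0 < β i)
    (hν : ∀ i, 0 < ν i) (hδ : ∀ i, 0 < δ i)
    (hπ : ∀ i, 0 < π i) (hπsum : ∑ i, π i = 1)
    (hR0 : ∀ i, 1 < Λ i * β i / (μ i * (μ i + ν i + δ i))) :
    1 < ((Finset.univ.sup' Finset.univ_nonempty Λ) * ∑ i, π i * β i) /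
      ((Finset.univ.inf' Finset.univ_nonempty μ) *
        ∑ i, π i * (μ i + ν i + δ i)) := by
  set A := Finset.univ.sup' Finset.univ_nonempty Λ with hA
  set B := Finset.univ.inf' Finset.univ_nonempty μ with hB
  have hApos : 0 < A := lt_of_lt_of_le (hΛ (Classical.arbitrary M))
    (Finset.le_sup' Λ (Finset.mem_univ _))
  have hBpos : 0 < B := by
    rw [hB, Finset.lt_inf'_iff]
    exact fun i _ => hμ i
  have hsumpos : 0 < ∑ i, π i * (μ i + ν i + δ i) := by
    apply Finset.sum_pos
    · intro i _
      have := hμ i; have := hν i; have := hδ i; have := hπ i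
      positivity
    · exact Finset.univ_nonempty
  rw [one_lt_div (by positivity)]
  rw [Finset.mul_sum, Finset.mul_sum]
  apply Finset.sum_lt_sum_of_nonempty Finset.univ_nonempty
  intro i _
  have h1 : μ i * (μ i + ν i + δ i) < Λ i * β i := by
    have hd : 0 < μ i * (μ i + ν i + δ i) := by
      have := hμ i; have := hν i; have := hδ i; positivity
    exact (one_lt_div hd).mp (hR0 i)
  have h2 : B ≤ μ i := Finset.inf'_le μ (Finset.mem_univ i)
  have h3 : Λ i ≤ A := Finset.le_sup' Λ (Finset.mem_univ i)
  have h4 := hπ i; have h5 := hβ i; have h6 := hμ i; have h7 := hν i; have h8 := hδ i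
  have e1 : B * (π i * (μ i + ν i + δ i)) ≤ μ i * (π i * (μ i + ν i + δ i)) :=
    mul_le_mul_of_nonneg_right h2 (by positivity)
  have e2 : Λ i * (π i * β i) ≤ A * (π i * β i) :=
    mul_le_mul_of_nonneg_right h3 (by positivity)
  nlinarith [mul_lt_mul_of_pos_left h1 h4]
end
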